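/- Let K be a field of prime characteristic p, for k ≥ 0 set τ_k = Σ_{r=0}^{k} X^{p^r + p^{2r}} ∈ K[X], and let i ≥ 1 be an integer. Then the family of polynomials X^j · ∂_{p^k}(τ_k), indexed by the pairs (j, k) of nonnegative integers with ⌈i/2⌉ ≤ k ≤ i and j + p^k ≤ p^i, is linearly independent over K. -/

import Mathlib

open Polynomial

/-- Distinct-degree families of nonzero polynomials are linearly independent. -/
lemma linIndep_of_natDegree {K : Type*} [Field K] {ι : Type*} (f : ι → K[X]) (d : ι → ℕ)
    (h0 : ∀ i, f i ≠ 0) (hd : ∀ i, (f i).natDegree = d i) (hinj : Function.Injective d) :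
    LinearIndependent K f := by
  rw [linearIndependent_iff']
  intro s g hsum i hi
  by_contra hgi
  have hFi : g i • f i ≠ 0 := smul_ne_zero hgi (h0 i)
  have hdeg := Polynomial.degree_sum_eq_of_disjoint (fun j => g j • f j) s ?_
  · rw [hsum, Polynomial.degree_zero] at hdeg
    have : degree (g i • f i) ≤ ⊥ := hdeg ▸ Finset.le_sup (f := fun j => degree (g j • f j)) hi
    rw [le_bot_iff, Polynomial.degree_eq_bot] at this
    exact hFi this
  · intro a ha b hb hab
    simp only [Set.mem_setOf_eq] at ha hb
    have hga : g a ≠ 0 := fun h => ha.2 (by simp [h])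
    have hgb : g b ≠ 0 := fun h => hb.2 (by simp [h])
    have da : degree (g a • f a) = (d a : WithBot ℕ) := by
      rw [smul_eq_C_mul, degree_mul, degree_C hga, zero_add,
        degree_eq_natDegree (h0 a), hd a]
    have db : degree (g b • f b) = (d b : WithBot ℕ) := by
      rw [smul_eq_C_mul, degree_mul, degree_C hgb, zero_add,
        degree_eq_natDegree (h0 b), hd b]
    simp only [Function.onFun, Function.comp_apply, da, db, Ne, Nat.cast_inj]
    exact fun h => hab (hinj h)

lemma cast_choose_eq_one (K : Type*) [Field K] (p : ℕ) [hp : Fact p.Prime] [CharP K p]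
    {a b : ℕ} (hab : a < b) : (((p ^ a + p ^ b).choose (p ^ a) : ℕ) : K) = 1 := by
  have hpa : p ^ a < p ^ b := Nat.pow_lt_pow_right hp.out.one_lt hab
  rw [Nat.add_choose_eq]
  push_cast
  rw [Finset.sum_eq_single ((p ^ a : ℕ), (0 : ℕ))]
  · simp
  · rintro ⟨x, y⟩ hxy hne
    rw [Finset.HasAntidiagonal.mem_antidiagonal] at hxy
    simp only at hxy ⊢
    rcases eq_or_ne x (p ^ a) with rfl | hx
    · exact absurd (by omega : y = 0) (fun h => hne (by simp [h]))
    rcases eq_or_ne x 0 with rfl | hx0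
    · have hy : y = p ^ a := by omega
      subst hy
      have hdvd : p ∣ (p ^ b).choose (p ^ a) :=
        hp.out.dvd_choose_pow (Nat.pos_of_ne_zero (pow_ne_zero _ hp.out.pos.ne')).ne'
          (by omega)
      rw [(CharP.cast_eq_zero_iff K p _).mpr hdvd, mul_zero]
    · have hdvd : p ∣ (p ^ a).choose x := hp.out.dvd_choose_pow hx0 hx
      rw [(CharP.cast_eq_zero_iff K p _).mpr hdvd, zero_mul]
  · intro h
    exact absurd (Finset.HasAntidiagonal.mem_antidiagonal.mpr (by simp)) h

lemma coeff_D (K : Type*) [Field K] (p : ℕ) [hp : Fact p.Prime] [CharP K p]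
    {k : ℕ} (hk : 1 ≤ k) :
    (Polynomial.hasseDeriv (p ^ k)
        (∑ r ∈ Finset.range (k + 1), (X : K[X]) ^ (p ^ r + p ^ (2 * r)))).coeff (p ^ (2 * k))
      = ((p ^ k + p ^ (2 * k)).choose (p ^ k) : K) := by
  rw [Polynomial.hasseDeriv_coeff]
  have hτ : (∑ r ∈ Finset.range (k + 1), (X : K[X]) ^ (p ^ r + p ^ (2 * r))).coeff
      (p ^ (2 * k) + p ^ k) = 1 := by
    rw [Polynomial.finset_sum_coeff]
    rw [Finset.sum_eq_single k]
    · rw [Polynomial.coeff_X_pow, if_pos (by ring)]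
    · intro r hr hrk
      rw [Finset.mem_range] at hr
      have hrlt : r < k := by omega
      rw [Polynomial.coeff_X_pow, if_neg]
      have h1 : p ^ r < p ^ k := Nat.pow_lt_pow_right hp.out.one_lt hrlt
      have h2 : p ^ (2 * r) < p ^ (2 * k) := Nat.pow_lt_pow_right hp.out.one_lt (by omega)
      omega
    · intro h
      exact absurd (Finset.mem_range.mpr (by omega)) h
  rw [hτ, mul_one, Nat.add_comm (p ^ (2 * k)) (p ^ k)]

lemma natDegree_D (K : Type*) [Field K] (p : ℕ) [hp : Fact p.Prime] [CharP K p]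
    {k : ℕ} (hk : 1 ≤ k) :
    (Polynomial.hasseDeriv (p ^ k)
        (∑ r ∈ Finset.range (k + 1), (X : K[X]) ^ (p ^ r + p ^ (2 * r)))).natDegree
      = p ^ (2 * k) ∧
    (Polynomial.hasseDeriv (p ^ k)
        (∑ r ∈ Finset.range (k + 1), (X : K[X]) ^ (p ^ r + p ^ (2 * r)))) ≠ 0 := by
  have hc : (Polynomial.hasseDeriv (p ^ k)
        (∑ r ∈ Finset.range (k + 1), (X : K[X]) ^ (p ^ r + p ^ (2 * r)))).coeff (p ^ (2 * k))
      = 1 := by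
    rw [coeff_D K p hk]
    exact_mod_cast cast_choose_eq_one K p (by omega : k < 2 * k)
  have hne : (Polynomial.hasseDeriv (p ^ k)
        (∑ r ∈ Finset.range (k + 1), (X : K[X]) ^ (p ^ r + p ^ (2 * r)))) ≠ 0 := by
    intro h
    rw [h, Polynomial.coeff_zero] at hc
    exact zero_ne_one hc
  refine ⟨le_antisymm ?_ (Polynomial.le_natDegree_of_ne_zero (hc ▸ one_ne_zero)), hne⟩
  refine (Polynomial.natDegree_hasseDeriv_le _ _).trans ?_
  have : (∑ r ∈ Finset.range (k + 1), (X : K[X]) ^ (p ^ r + p ^ (2 * r))).natDegree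
      ≤ p ^ k + p ^ (2 * k) := by
    refine Polynomial.natDegree_sum_le_of_forall_le _ _ (fun r hr => ?_)
    rw [Finset.mem_range] at hr
    rw [Polynomial.natDegree_X_pow]
    have h1 : p ^ r ≤ p ^ k := Nat.pow_le_pow_right hp.out.pos (by omega)
    have h2 : p ^ (2 * r) ≤ p ^ (2 * k) := Nat.pow_le_pow_right hp.out.pos (by omega)
    omega
  omega
theorem linearIndependent_rjk (K : Type*) [Field K] (p : ℕ) [Fact p.Prime] [CharP K p]
    (i : ℕ) (hi : 1 ≤ i) :
    LinearIndependent K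
      (fun jk : {jk : ℕ × ℕ // (i + 1) / 2 ≤ jk.2 ∧ jk.2 ≤ i ∧ jk.1 + p ^ jk.2 ≤ p ^ i} =>
        (X : K[X]) ^ jk.1.1 *
          Polynomial.hasseDeriv (p ^ jk.1.2)
            (∑ r ∈ Finset.range (jk.1.2 + 1), (X : K[X]) ^ (p ^ r + p ^ (2 * r)))) := by
  have hp : p.Prime := Fact.out
  have hk1 : ∀ jk : {jk : ℕ × ℕ // (i + 1) / 2 ≤ jk.2 ∧ jk.2 ≤ i ∧ jk.1 + p ^ jk.2 ≤ p ^ i},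
      1 ≤ jk.1.2 := fun jk => by have := jk.2.1; omega
  apply linIndep_of_natDegree _ (fun jk => jk.1.1 + p ^ (2 * jk.1.2))
  · intro jk
    exact mul_ne_zero (pow_ne_zero _ Polynomial.X_ne_zero) (natDegree_D K p (hk1 jk)).2
  · intro jk
    rw [Polynomial.natDegree_mul (pow_ne_zero _ Polynomial.X_ne_zero)
      (natDegree_D K p (hk1 jk)).2, Polynomial.natDegree_X_pow, (natDegree_D K p (hk1 jk)).1]
  · have key : ∀ j k k' : ℕ, (i + 1) / 2 ≤ k → j + p ^ k ≤ p ^ i → k < k' →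
        j + p ^ (2 * k) < p ^ (2 * k') := by
      intro j k k' hik hji hkk'
      have h1 : p ^ i ≤ p ^ (2 * k) := Nat.pow_le_pow_right hp.pos (by omega)
      have h2 : 2 * p ^ (2 * k) ≤ p ^ (2 * k + 1) := by
        rw [pow_succ, mul_comm 2]
        exact Nat.mul_le_mul_left _ hp.two_le
      have h3 : p ^ (2 * k + 1) ≤ p ^ (2 * k') := Nat.pow_le_pow_right hp.pos (by omega)
      have h4 : 1 ≤ p ^ k := Nat.one_le_pow _ _ hp.pos
      omega
    rintro ⟨⟨j, k⟩, hjk⟩ ⟨⟨j', k'⟩, hjk'⟩ heq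
    change j + p ^ (2 * k) = j' + p ^ (2 * k') at heq
    obtain ⟨h1, h2, h3⟩ := hjk
    obtain ⟨h1', h2', h3'⟩ := hjk'
    rcases lt_trichotomy k k' with h | h | h
    · exact absurd heq (by have := key j k k' h1 h3 h; omega)
    · subst h
      apply Subtype.ext
      show (j, k) = (j', k)
      exact Prod.ext (by omega) rfl
    · exact absurd heq (by have := key j' k' k h1' h3' h; omega)
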